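/- arXiv:2211.04612 — 5 statements merged into one kernel-verified Lean document; each statement's English description precedes it below -/
import Mathlib

section
/- For integers M > M' ≥ 2, define h : [0,∞) → ℝ by h(δ) = ln((1+δ^{M−1})/(1+δ^{M'−1})) − (M−M')·ln(1+δ). Then h is strictly decreasing on [0,1). -/
private lemma step_ineq (k : ℕ) (hk : 1 ≤ k) (a b : ℝ) (ha : 0 ≤ a)
    (hab : a < b) (hb : b < 1) :
    Real.log (1 + b ^ (k + 1)) + Real.log (1 + a ^ k) + Real.log (1 + a) <
      Real.log (1 + a ^ (k + 1)) + Real.log (1 + b ^ k) + Real.log (1 + b) := by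
  have hb0 : 0 ≤ b := ha.trans hab.le
  have h1 : (0:ℝ) < 1 + a ^ k := by positivity
  have h2 : (0:ℝ) < 1 + b ^ k := by positivity
  have h3 : (0:ℝ) < 1 + a ^ (k+1) := by positivity
  have h4 : (0:ℝ) < 1 + b ^ (k+1) := by positivity
  have h5 : (0:ℝ) < 1 + a := by linarith
  have h6 : (0:ℝ) < 1 + b := by linarith
  have hab1 : a * b < 1 := by nlinarith
  have hpk : (a * b) ^ k < 1 := by
    apply pow_lt_one₀ (by positivity) hab1 (by omega)
  have hk2 : a ^ k ≤ b ^ k := pow_le_pow_left₀ ha hab.le k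
  have key : (1 + b ^ (k+1)) * ((1 + a ^ k) * (1 + a)) <
      (1 + a ^ (k+1)) * ((1 + b ^ k) * (1 + b)) := by
    have hD : (1 + a ^ (k+1)) * ((1 + b ^ k) * (1 + b)) -
        (1 + b ^ (k+1)) * ((1 + a ^ k) * (1 + a)) =
        (b - a) * (1 - (a*b) ^ k) + (b ^ k - a ^ k) * (1 - a*b) := by
      ring
    have hX : 0 < (b - a) * (1 - (a*b) ^ k) := by
      apply mul_pos (by linarith) (by linarith)
    have hY : 0 ≤ (b ^ k - a ^ k) * (1 - a*b) := by
      apply mul_nonneg (by linarith) (by linarith)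
    linarith
  calc Real.log (1 + b ^ (k+1)) + Real.log (1 + a ^ k) + Real.log (1 + a)
      = Real.log ((1 + b ^ (k+1)) * ((1 + a ^ k) * (1 + a))) := by
        rw [Real.log_mul (by positivity) (by positivity),
          Real.log_mul h1.ne' h5.ne']; ring
    _ < Real.log ((1 + a ^ (k+1)) * ((1 + b ^ k) * (1 + b))) := by
        apply Real.log_lt_log (by positivity) key
    _ = _ := by
        rw [Real.log_mul (by positivity) (by positivity),
          Real.log_mul h2.ne' h6.ne']; ring

private lemma main_ineq (k : ℕ) (hk : 1 ≤ k) :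
    ∀ M, k + 2 ≤ M → ∀ a b : ℝ, 0 ≤ a → a < b → b < 1 →
      Real.log (1 + b ^ (M - 1)) - Real.log (1 + b ^ k) -
          ((M : ℝ) - (k + 1)) * Real.log (1 + b) <
        Real.log (1 + a ^ (M - 1)) - Real.log (1 + a ^ k) -
          ((M : ℝ) - (k + 1)) * Real.log (1 + a) := by
  intro M hM
  induction M, hM using Nat.le_induction with
  | base =>
    intro a b ha hab hb
    have h := step_ineq k hk a b ha hab hb
    have e1 : k + 2 - 1 = k + 1 := rfl
    rw [e1]
    have e2 : ((k + 2 : ℕ) : ℝ) - ((k : ℝ) + 1) = 1 := by push_cast; ring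
    rw [e2]
    linarith
  | succ n hn ih =>
    intro a b ha hab hb
    have ih' := ih a b ha hab hb
    obtain ⟨m, rfl⟩ : ∃ m, n = m + 1 := ⟨n - 1, by omega⟩
    have hm : 1 ≤ m := by omega
    have h := step_ineq m hm a b ha hab hb
    have e1 : m + 1 - 1 = m := rfl
    have e2 : m + 1 + 1 - 1 = m + 1 := rfl
    rw [e1] at ih'
    rw [e2]
    have e3 : ((m + 1 + 1 : ℕ) : ℝ) - ((k : ℝ) + 1) =
        (((m + 1 : ℕ) : ℝ) - ((k : ℝ) + 1)) + 1 := by push_cast; ring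
    rw [e3]
    nlinarith [Real.log_nonneg (by linarith : (1:ℝ) ≤ 1 + b)]

/-- For integers `M > M' ≥ 2`, the function
`h(δ) = ln((1 + δ^{M−1})/(1 + δ^{M'−1})) − (M − M')·ln(1 + δ)`
is strictly decreasing on `[0, 1)`. -/
theorem h_strictAntiOn (M M' : ℕ) (h2 : 2 ≤ M') (hMM : M' < M) :
    StrictAntiOn
      (fun δ : ℝ =>
        Real.log ((1 + δ ^ (M - 1)) / (1 + δ ^ (M' - 1))) -
          ((M : ℝ) - (M' : ℝ)) * Real.log (1 + δ))
      (Set.Ico (0 : ℝ) 1) := by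
  intro a ha b hb hab
  obtain ⟨ha0, ha1⟩ := ha
  obtain ⟨hb0, hb1⟩ := hb
  obtain ⟨k, rfl⟩ : ∃ k, M' = k + 1 := ⟨M' - 1, by omega⟩
  have hk : 1 ≤ k := by omega
  have hM : k + 2 ≤ M := by omega
  have key := main_ineq k hk M hM a b ha0 hab hb1
  have ek : k + 1 - 1 = k := rfl
  simp only [ek]
  have la : Real.log ((1 + a ^ (M - 1)) / (1 + a ^ k)) =
      Real.log (1 + a ^ (M - 1)) - Real.log (1 + a ^ k) :=
    Real.log_div (by positivity) (by positivity)
  have lb : Real.log ((1 + b ^ (M - 1)) / (1 + b ^ k)) =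
      Real.log (1 + b ^ (M - 1)) - Real.log (1 + b ^ k) :=
    Real.log_div (by positivity) (by positivity)
  rw [la, lb]
  have ec : ((k + 1 : ℕ) : ℝ) = (k : ℝ) + 1 := by push_cast; ring
  rw [ec]
  linarith
end

section
/- Let P and Q be probability distributions on a two-point set {a_1, a_2} with first-symbol probabilities p and q respectively, where p ≠ q and both p, q lie in (c, 1−c), with c the unique root in (0,1/2) of c^{M−1}+(1−c)^{M−1} = 2/M for some M ≥ 3. Let U_P and U_Q denote the distributions of a uniformly chosen element of the set of unique values of M i.i.d. draws from P and Q, respectively. Then the total variation distance satisfies TV(U_P, U_Q) < TV(P, Q) = |p − q|. -/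
open Set

private lemma aux_strict_convex (n : ℕ) (hn : 2 ≤ n) :
    StrictConvexOn ℝ (Set.Icc (0:ℝ) 1) (fun x : ℝ => x ^ n + (1 - x) ^ n) := by
  have hderiv : ∀ x : ℝ, HasDerivAt (fun x : ℝ => x ^ n + (1 - x) ^ n)
      ((n : ℝ) * x ^ (n - 1) - (n : ℝ) * (1 - x) ^ (n - 1)) x := by
    intro x
    have h1 : HasDerivAt (fun x : ℝ => x ^ n) ((n : ℝ) * x ^ (n - 1)) x := hasDerivAt_pow n x
    have h2 : HasDerivAt (fun x : ℝ => (1 - x) ^ n)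
        (((n : ℝ) * (1 - x) ^ (n - 1)) * (0 - 1)) x :=
      (hasDerivAt_pow n (1 - x)).comp x ((hasDerivAt_const x 1).sub (hasDerivAt_id x))
    have : HasDerivAt (fun x : ℝ => x ^ n + (1 - x) ^ n) _ x := h1.add h2
    convert this using 1
    ring
  have hd : deriv (fun x : ℝ => x ^ n + (1 - x) ^ n)
      = fun x : ℝ => (n : ℝ) * x ^ (n - 1) - (n : ℝ) * (1 - x) ^ (n - 1) := by
    funext x; exact (hderiv x).deriv
  apply StrictMonoOn.strictConvexOn_of_deriv (convex_Icc 0 1)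
  · exact Continuous.continuousOn (by continuity)
  · rw [hd, interior_Icc]
    intro a ha b hb hab
    have h1 : a ^ (n - 1) < b ^ (n - 1) :=
      pow_lt_pow_left₀ hab (le_of_lt ha.1) (by omega)
    have h2 : (1 - b) ^ (n - 1) < (1 - a) ^ (n - 1) :=
      pow_lt_pow_left₀ (by linarith) (by linarith [hb.2]) (by omega)
    have hn1 : (0:ℝ) < n := by positivity
    have h3 := mul_lt_mul_of_pos_left h1 hn1
    have h4 := mul_lt_mul_of_pos_left h2 hn1
    dsimp only
    linarith

private lemma aux_sum_lt (n : ℕ) (hn : 2 ≤ n) (c : ℝ) (hc0 : 0 < c) (hc2 : c < 1/2)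
    (x : ℝ) (hx : x ∈ Set.Ioo c (1 - c)) :
    x ^ n + (1 - x) ^ n < c ^ n + (1 - c) ^ n := by
  have h12 : (0:ℝ) < 1 - 2*c := by linarith
  set t : ℝ := (1 - c - x) / (1 - 2*c) with ht
  have ht0 : 0 < t := by
    apply div_pos _ h12; linarith [hx.2]
  have ht1 : 0 < 1 - t := by
    have : t < 1 := by rw [ht, div_lt_one h12]; linarith [hx.1]
    linarith
  have hcm : c ∈ Set.Icc (0:ℝ) 1 := ⟨le_of_lt hc0, by linarith⟩
  have h1cm : (1 - c) ∈ Set.Icc (0:ℝ) 1 := ⟨by linarith, by linarith⟩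
  have hne : c ≠ 1 - c := by intro h; linarith
  have hkey := (aux_strict_convex n hn).2 hcm h1cm hne ht0 ht1 (by ring)
  have hx' : t • c + (1 - t) • (1 - c) = x := by
    simp only [smul_eq_mul, ht]
    field_simp [(by linarith : (0:ℝ) < 1 - c*2).ne']
    ring
  rw [hx'] at hkey
  have hsym : (1 - (1 - c)) ^ n = c ^ n := by ring_nf
  simp only at hkey
  calc x ^ n + (1 - x) ^ n < t * (c ^ n + (1 - c) ^ n) + (1 - t) * ((1-c) ^ n + (1 - (1-c)) ^ n) := hkey
    _ = c ^ n + (1 - c) ^ n := by rw [hsym]; ring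

/-- Total variation contraction for the distribution of a uniformly chosen unique
element of `M` i.i.d. draws from a two-point distribution.  If `P, Q` put probabilities
`p, q` on the first symbol, then `U_P` puts probability `uP = (1 + p^M − (1−p)^M)/2` on
the first symbol (and `1 − uP` on the second), and similarly for `U_Q`.  Writing total
variation on the two-point set explicitly as half the ℓ¹ distance, one has
`TV(U_P, U_Q) < TV(P, Q) = |p − q|` whenever `p ≠ q` both lie in `(c, 1−c)`, where `c`
is the unique root in `(0, 1/2)` of `c^{M−1} + (1−c)^{M−1} = 2/M`. -/
theorem tv_contraction_unique (M : ℕ) (hM : 3 ≤ M)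
    (c : ℝ) (hc : c ∈ Set.Ioo (0 : ℝ) (1 / 2))
    (heq : c ^ (M - 1) + (1 - c) ^ (M - 1) = 2 / (M : ℝ))
    (p q : ℝ) (hp : p ∈ Set.Ioo c (1 - c)) (hq : q ∈ Set.Ioo c (1 - c)) (hpq : p ≠ q)
    (uP uQ : ℝ)
    (huP : uP = (1 + p ^ M - (1 - p) ^ M) / 2)
    (huQ : uQ = (1 + q ^ M - (1 - q) ^ M) / 2) :
    (|uP - uQ| + |(1 - uP) - (1 - uQ)|) / 2 < (|p - q| + |(1 - p) - (1 - q)|) / 2 ∧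
      (|p - q| + |(1 - p) - (1 - q)|) / 2 = |p - q| := by
  obtain ⟨hc0, hc2⟩ := hc
  have hM0 : (0:ℝ) < M := by positivity
  set f : ℝ → ℝ := fun x => (x ^ M - (1 - x) ^ M) / 2 with hf
  have hderiv : ∀ x : ℝ, HasDerivAt f
      (((M : ℝ) * x ^ (M - 1) + (M : ℝ) * (1 - x) ^ (M - 1)) / 2) x := by
    intro x
    have h1 : HasDerivAt (fun x : ℝ => x ^ M) ((M : ℝ) * x ^ (M - 1)) x := hasDerivAt_pow M x
    have h2 : HasDerivAt (fun x : ℝ => (1 - x) ^ M)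
        (((M : ℝ) * (1 - x) ^ (M - 1)) * (0 - 1)) x :=
      (hasDerivAt_pow M (1 - x)).comp x ((hasDerivAt_const x 1).sub (hasDerivAt_id x))
    have : HasDerivAt f _ x := (h1.sub h2).div_const 2
    convert this using 1
    ring
  -- key: for a < b in (c, 1-c), |f b - f a| < b - a
  have key : ∀ a b : ℝ, a ∈ Set.Ioo c (1 - c) → b ∈ Set.Ioo c (1 - c) → a < b →
      |f b - f a| < b - a := by
    intro a b ha hb hab
    obtain ⟨ξ, hξ, hξd⟩ := exists_hasDerivAt_eq_slope f _ hab
      (Continuous.continuousOn (by fun_prop)) (fun x _ => hderiv x)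
    have hξc : ξ ∈ Set.Ioo c (1 - c) := ⟨lt_trans ha.1 hξ.1, lt_trans hξ.2 hb.2⟩
    have hξpos : 0 < ξ := lt_trans hc0 hξc.1
    have hξ1 : ξ < 1 := by linarith [hξc.2]
    have hlt : ((M : ℝ) * ξ ^ (M - 1) + (M : ℝ) * (1 - ξ) ^ (M - 1)) / 2 < 1 := by
      have := aux_sum_lt (M - 1) (by omega) c hc0 hc2 ξ hξc
      rw [heq] at this
      rw [div_lt_one (by norm_num : (0:ℝ) < 2)]
      calc (M : ℝ) * ξ ^ (M - 1) + (M : ℝ) * (1 - ξ) ^ (M - 1)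
          = (M : ℝ) * (ξ ^ (M - 1) + (1 - ξ) ^ (M - 1)) := by ring
        _ < (M : ℝ) * (2 / M) := by
            exact mul_lt_mul_of_pos_left this hM0
        _ = 2 := by field_simp
    have hge : 0 ≤ ((M : ℝ) * ξ ^ (M - 1) + (M : ℝ) * (1 - ξ) ^ (M - 1)) / 2 := by
      have h1 := pow_nonneg (le_of_lt hξpos) (M - 1)
      have h2 := pow_nonneg (by linarith : (0:ℝ) ≤ 1 - ξ) (M - 1)
      have h3 := mul_nonneg (le_of_lt hM0) h1
      have h4 := mul_nonneg (le_of_lt hM0) h2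
      linarith
    have hfb : f b - f a = (((M : ℝ) * ξ ^ (M - 1) + (M : ℝ) * (1 - ξ) ^ (M - 1)) / 2) * (b - a) := by
      rw [hξd, div_mul_cancel₀ _ (sub_ne_zero_of_ne hab.ne')]
    rw [hfb, abs_mul, abs_of_nonneg hge, abs_of_pos (by linarith : (0:ℝ) < b - a)]
    calc _ < 1 * (b - a) := by
          apply mul_lt_mul_of_pos_right hlt; linarith
      _ = b - a := one_mul _
  have hu : uP - uQ = f p - f q := by rw [huP, huQ, hf]; ring
  have hmain : |uP - uQ| < |p - q| := by
    rcases lt_or_gt_of_ne hpq with h | h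
    · rw [hu, abs_sub_comm, abs_sub_comm p q, abs_of_pos (by linarith : (0:ℝ) < q - p)]
      exact key p q hp hq h
    · rw [hu, abs_of_pos (by linarith : (0:ℝ) < p - q)]
      exact key q p hq hp h
  constructor
  · have e1 : |(1 - uP) - (1 - uQ)| = |uP - uQ| := by rw [← abs_neg]; ring_nf
    have e2 : |(1 - p) - (1 - q)| = |p - q| := by rw [← abs_neg]; ring_nf
    rw [e1, e2]; linarith
  · have e2 : |(1 - p) - (1 - q)| = |p - q| := by rw [← abs_neg]; ring_nf
    rw [e2]; ring
end

section
/- Let n ≥ 1 and α ∈ (0,1), and let E_1,…,E_n, E_{n+1} be exchangeable real-valued random variables. Let Q̂ be the ⌈(1−α)(n+1)⌉-th smallest value among E_1,…,E_n (with Q̂ = +∞ if ⌈(1−α)(n+1)⌉ > n). Then P(E_{n+1} ≤ Q̂) ≥ 1 − α. -/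
open MeasureTheory

lemma sorted_getElem_iff {l : List ℝ} (hl : l.Pairwise (· ≤ ·))
    (p : ℝ → Prop) [DecidablePred p] (hp : ∀ a b : ℝ, a ≤ b → p b → p a)
    {j : ℕ} (hj : j < l.length) :
    p l[j] ↔ j < l.countP (fun a => decide (p a)) := by
  constructor
  · intro h
    have h1 : List.countP (fun a => decide (p a)) (l.take (j+1)) = (l.take (j+1)).length := by
      rw [List.countP_eq_length]
      intro a ha
      obtain ⟨i, hi, rfl⟩ := List.mem_iff_getElem.mp ha
      have hi' : i < l.length := lt_of_lt_of_le hi (by simp [List.length_take])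
      rw [List.getElem_take]
      have hij : i ≤ j := by
        have := hi; simp [List.length_take] at this; omega
      have : l[i] ≤ l[j] := hl.rel_get_of_le (a := ⟨i, hi'⟩) (b := ⟨j, hj⟩) hij
      simpa using hp _ _ this h
    have h2 : (l.take (j+1)).length = j + 1 := by simp [List.length_take]; omega
    calc j < j + 1 := Nat.lt_succ_self j
      _ = List.countP (fun a => decide (p a)) (l.take (j+1)) := by rw [h1, h2]
      _ ≤ _ := List.Sublist.countP_le (List.take_sublist _ _)
  · intro h
    by_contra hnp
    have h0 : List.countP (fun a => decide (p a)) (l.drop j) = 0 := by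
      rw [List.countP_eq_zero]
      intro a ha
      obtain ⟨i, hi, rfl⟩ := List.mem_iff_getElem.mp ha
      rw [List.getElem_drop]
      have hji : j ≤ j + i := Nat.le_add_right _ _
      have hlt : j + i < l.length := by simp [List.length_drop] at hi ⊢; omega
      have : l[j] ≤ l[j+i] := hl.rel_get_of_le (a := ⟨j, hj⟩) (b := ⟨j+i, hlt⟩) hji
      simp only [decide_eq_true_eq]
      exact fun hpa => hnp (hp _ _ this hpa)
    have := List.take_append_drop j l
    have hc : List.countP (fun a => decide (p a)) l ≤ j := by
      conv_lhs at h =>skip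
      calc List.countP (fun a => decide (p a)) l
          = List.countP (fun a => decide (p a)) (l.take j)
            + List.countP (fun a => decide (p a)) (l.drop j) := by
            rw [← List.countP_append, List.take_append_drop]
        _ ≤ (l.take j).length + 0 := by rw [h0]; exact Nat.add_le_add_right List.countP_le_length 0
        _ ≤ j := by simp [List.length_take]
    omega

/-- k-th smallest characterization for multisets. -/

lemma kth_mem_iff (m : Multiset ℝ) (k : ℕ) (hk1 : 1 ≤ k) (hk : k ≤ Multiset.card m)
    (p : ℝ → Prop) [DecidablePred p] (hp : ∀ a b : ℝ, a ≤ b → p b → p a) :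
    p ((m.sort (· ≤ ·)).getD (k-1) 0) ↔ k ≤ m.countP p := by
  have hlen : (m.sort (· ≤ ·)).length = Multiset.card m := Multiset.length_sort _
  have hj : k - 1 < (m.sort (· ≤ ·)).length := by omega
  rw [List.getD_eq_getElem _ _ hj]
  rw [sorted_getElem_iff (Multiset.pairwise_sort _ _) p hp hj]
  have : m.countP p = List.countP (fun a => decide (p a)) (m.sort (· ≤ ·)) := by
    rw [← Multiset.coe_countP, Multiset.sort_eq]
  rw [this]
  omega

lemma le_kth_iff (m : Multiset ℝ) (k : ℕ) (hk1 : 1 ≤ k) (hk : k ≤ Multiset.card m) (a : ℝ) :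
    a ≤ (m.sort (· ≤ ·)).getD (k-1) 0 ↔ m.countP (· < a) < k := by
  have := kth_mem_iff m k hk1 hk (· < a) (fun b c hbc hc => lt_of_le_of_lt hbc hc)
  constructor
  · intro h; by_contra hc; push_neg at hc
    exact absurd (this.mpr hc) (not_lt.mpr h)
  · intro h; by_contra hc; push_neg at hc
    exact absurd (this.mp hc) (not_le.mpr h)

lemma countP_lt_erase (m : Multiset ℝ) (a : ℝ) (ha : a ∈ m) :
    (m.erase a).countP (· < a) = m.countP (· < a) := by
  conv_rhs => rw [← Multiset.cons_erase ha]
  rw [Multiset.countP_cons]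
  simp

lemma count_lt_card {N : ℕ} (x : Fin N → ℝ) (k : ℕ) (hk1 : 1 ≤ k) (hk : k ≤ N) :
    k ≤ (Finset.univ.filter fun i =>
        (Finset.univ.filter fun j => x j < x i).card < k).card := by
  set m : Multiset ℝ := Multiset.map x Finset.univ.val with hm
  have hcard : Multiset.card m = N := by simp [hm]
  set t : ℝ := (m.sort (· ≤ ·)).getD (k-1) 0 with ht
  have hcount : ∀ p : ℝ → Prop, ∀ _ : DecidablePred p,
      m.countP p = (Finset.univ.filter fun i => p (x i)).card := by
    intro p _
    rw [hm, Multiset.countP_map]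
    rfl
  have h1 : k ≤ (Finset.univ.filter fun i => x i ≤ t).card := by
    rw [← hcount (· ≤ t) inferInstance]
    exact (kth_mem_iff m k hk1 (hcard ▸ hk) (· ≤ t)
      (fun a b hab hb => le_trans hab hb)).mp le_rfl
  refine le_trans h1 (Finset.card_le_card ?_)
  intro i hi
  simp only [Finset.mem_filter, Finset.mem_univ, true_and] at hi ⊢
  have hxi : m.countP (· < x i) < k :=
    (le_kth_iff m k hk1 (hcard ▸ hk) (x i)).mp hi
  rwa [hcount (· < x i) inferInstance] at hxi

/-- Conformal calibration lemma: if `E 0, …, E n` are exchangeable real random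
variables (`n` calibration scores `E 0, …, E (n-1)` and a test score `E n`), and `Q̂`
is the `⌈(1−α)(n+1)⌉`-th smallest value among the first `n` of them (`+∞` if
`⌈(1−α)(n+1)⌉ > n`), then `P(E n ≤ Q̂) ≥ 1 − α`. -/
theorem conformal_calibration
    {Ω : Type*} [MeasurableSpace Ω] (μ : Measure Ω) [IsProbabilityMeasure μ]
    (n : ℕ) (hn : 1 ≤ n) (α : ℝ) (hα : α ∈ Set.Ioo (0 : ℝ) 1)
    (E : Fin (n + 1) → Ω → ℝ) (hmeas : ∀ i, Measurable (E i))
    (hexch : ∀ σ : Equiv.Perm (Fin (n + 1)),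
      Measure.map (fun ω (i : Fin (n + 1)) => E (σ i) ω) μ =
        Measure.map (fun ω (i : Fin (n + 1)) => E i ω) μ)
    (k : ℕ) (hk : k = ⌈(1 - α) * ((n : ℝ) + 1)⌉₊)
    (Qhat : Ω → EReal)
    (hQhat : ∀ ω, Qhat ω =
      if k ≤ n then
        (((Multiset.sort
            (Multiset.ofList (List.ofFn fun i : Fin n => E i.castSucc ω)) (· ≤ ·)).getD
          (k - 1) 0 : ℝ) : EReal)
      else ⊤) :
    1 - α ≤ (μ {ω | (E (Fin.last n) ω : EReal) ≤ Qhat ω}).toReal := by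
  obtain ⟨hα0, hα1⟩ := hα
  by_cases hkn : k ≤ n
  swap
  · have hev : {ω | (E (Fin.last n) ω : EReal) ≤ Qhat ω} = Set.univ := by
      ext ω; simp [hQhat ω, if_neg hkn]
    rw [hev, measure_univ]
    simp only [ENNReal.toReal_one]
    linarith
  have hk1 : 1 ≤ k := by
    rw [hk, Nat.one_le_iff_ne_zero, ← Nat.pos_iff_ne_zero, Nat.ceil_pos]
    have : (0:ℝ) < (n:ℝ) + 1 := by positivity
    nlinarith
  set F : Ω → Fin (n+1) → ℝ := fun ω i => E i ω with hF
  have hFmeas : Measurable F := measurable_pi_lambda _ hmeas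
  set S : Fin (n+1) → Set (Fin (n+1) → ℝ) := fun i =>
    {x | (Finset.univ.filter fun j => x j < x i).card < k} with hS
  have hSmeas : ∀ i, MeasurableSet (S i) := by
    intro i
    have hf : Measurable fun x : Fin (n+1) → ℝ =>
        (Finset.univ.filter fun j => x j < x i).card := by
      simp only [Finset.card_filter]
      exact Finset.measurable_sum _ (fun j _ =>
        Measurable.ite (measurableSet_lt (measurable_pi_apply j) (measurable_pi_apply i))
          measurable_const measurable_const)
    exact measurableSet_lt hf measurable_const
  set A : Fin (n+1) → Set Ω := fun i => F ⁻¹' (S i) with hA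
  have hAmeas : ∀ i, MeasurableSet (A i) := fun i => hFmeas (hSmeas i)
  -- all A i have the same measure
  have hAeq : ∀ i, μ (A i) = μ (A (Fin.last n)) := by
    intro i
    set σ : Equiv.Perm (Fin (n+1)) := Equiv.swap i (Fin.last n) with hσ
    have hσmeas : Measurable (fun ω (j : Fin (n+1)) => E (σ j) ω) :=
      measurable_pi_lambda _ (fun j => hmeas (σ j))
    have h1 := congrArg (fun ν : Measure (Fin (n+1) → ℝ) => ν (S (Fin.last n))) (hexch σ)
    rw [Measure.map_apply hσmeas (hSmeas (Fin.last n)),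
        Measure.map_apply hFmeas (hSmeas (Fin.last n))] at h1
    have h2 : (fun ω (j : Fin (n+1)) => E (σ j) ω) ⁻¹' (S (Fin.last n)) = A i := by
      ext ω
      simp only [hA, hS, Set.mem_preimage, Set.mem_setOf_eq]
      have hcard : (Finset.univ.filter fun j => E (σ j) ω < E (σ (Fin.last n)) ω).card
          = (Finset.univ.filter fun j => E j ω < E (σ (Fin.last n)) ω).card := by
        rw [Finset.card_filter, Finset.card_filter]
        exact Equiv.sum_comp σ (fun j => if E j ω < E (σ (Fin.last n)) ω then 1 else 0)
      rw [hcard, hσ, Equiv.swap_apply_right]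
    rw [h2, show F ⁻¹' S (Fin.last n) = A (Fin.last n) from rfl] at h1
    exact h1
  -- pointwise counting bound
  have hpt : ∀ ω, (k : ENNReal) ≤ ∑ i, (A i).indicator (fun _ => (1:ENNReal)) ω := by
    intro ω
    have hcomb := count_lt_card (F ω) k hk1 (by omega)
    have heq : ∑ i, (A i).indicator (fun _ => (1:ENNReal)) ω
        = ((Finset.univ.filter fun i =>
            (Finset.univ.filter fun j => F ω j < F ω i).card < k).card : ENNReal) := by
      rw [Finset.card_filter, Nat.cast_sum]
      refine Finset.sum_congr rfl (fun i _ => ?_)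
      by_cases h : (Finset.univ.filter fun j => F ω j < F ω i).card < k
      · rw [if_pos h, Set.indicator_of_mem (by exact h)]
        simp
      · rw [if_neg h, Set.indicator_of_notMem (by exact h)]
        simp
    rw [heq]
    exact_mod_cast hcomb
  have hsum : (k : ENNReal) ≤ ∑ i, μ (A i) := by
    calc (k : ENNReal) = ∫⁻ _, (k : ENNReal) ∂μ := by simp
      _ ≤ ∫⁻ ω, ∑ i, (A i).indicator (fun _ => (1:ENNReal)) ω ∂μ := lintegral_mono hpt
      _ = ∑ i, ∫⁻ ω, (A i).indicator (fun _ => (1:ENNReal)) ω ∂μ :=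
          lintegral_finset_sum _ (fun i _ => measurable_const.indicator (hAmeas i))
      _ = ∑ i, μ (A i) := Finset.sum_congr rfl (fun i _ => lintegral_indicator_one (hAmeas i))
  have hsum2 : (k : ENNReal) ≤ ((n : ENNReal) + 1) * μ (A (Fin.last n)) := by
    calc (k : ENNReal) ≤ ∑ i, μ (A i) := hsum
      _ = ∑ _i : Fin (n+1), μ (A (Fin.last n)) := Finset.sum_congr rfl (fun i _ => hAeq i)
      _ = ((n : ENNReal) + 1) * μ (A (Fin.last n)) := by
          rw [Finset.sum_const, Finset.card_univ, Fintype.card_fin, nsmul_eq_mul]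
          push_cast; ring
  -- event identity
  have hev : {ω | (E (Fin.last n) ω : EReal) ≤ Qhat ω} = A (Fin.last n) := by
    ext ω
    rw [Set.mem_setOf_eq, hQhat ω, if_pos hkn, EReal.coe_le_coe_iff]
    set x : Fin (n+1) → ℝ := F ω with hx
    set m : Multiset ℝ := Multiset.map x Finset.univ.val with hm
    set m' : Multiset ℝ := Multiset.ofList (List.ofFn fun i : Fin n => x i.castSucc) with hm'
    have hsplit : m = x (Fin.last n) ::ₘ m' := by
      rw [hm, Fin.univ_val_map, List.ofFn_succ' x, hm']
      simp only [List.concat_eq_append]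
      rw [← Multiset.coe_add]
      rw [← Multiset.singleton_add]
      rw [add_comm]
      rfl
    have hmem : x (Fin.last n) ∈ m := by rw [hsplit]; exact Multiset.mem_cons_self _ _
    have herase : m.erase (x (Fin.last n)) = m' := by rw [hsplit, Multiset.erase_cons_head]
    have hcardm' : Multiset.card m' = n := by
      have : Multiset.card m = n + 1 := by simp [hm]
      rw [hsplit] at this; simpa using this
    have hiff : x (Fin.last n) ≤ (m'.sort (· ≤ ·)).getD (k-1) 0 ↔
        m'.countP (· < x (Fin.last n)) < k :=
      le_kth_iff m' k hk1 (by omega) _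
    have hc2 : m'.countP (· < x (Fin.last n)) = m.countP (· < x (Fin.last n)) := by
      rw [← herase]; exact countP_lt_erase m _ hmem
    have hc3 : m.countP (· < x (Fin.last n))
        = (Finset.univ.filter fun j => x j < x (Fin.last n)).card := by
      rw [hm, Multiset.countP_map]; rfl
    constructor
    · intro h
      have := hiff.mp (by exact_mod_cast h)
      rw [hc2, hc3] at this
      exact this
    · intro h
      have h' : m'.countP (· < x (Fin.last n)) < k := by rw [hc2, hc3]; exact h
      exact_mod_cast hiff.mpr h'
  rw [hev]
  -- convert to reals
  have hfin : μ (A (Fin.last n)) ≠ ⊤ := measure_ne_top μ _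
  have htR : (k : ℝ) ≤ ((n:ℝ) + 1) * (μ (A (Fin.last n))).toReal := by
    have h1 := ENNReal.toReal_mono (by
      refine ENNReal.mul_ne_top ?_ hfin
      simp) hsum2
    rw [ENNReal.toReal_mul] at h1
    simpa [ENNReal.toReal_add] using h1
  have hceil : (1 - α) * ((n:ℝ) + 1) ≤ (k : ℝ) := by
    rw [hk]; exact Nat.le_ceil _
  have hpos : (0:ℝ) < (n:ℝ) + 1 := by positivity
  nlinarith [htR, hceil, hpos]
end

section
/- Let Z_1,…,Z_{m+1} be exchangeable random variables taking values in a countable set 𝒵, and let m_0 ≤ m. Define Y_i = ∑_{i'=m_0+1}^{m} 1{Z_{i'} = Z_i} and X_i = (Z_i, φ(Z_{m_0+1},…,Z_m)) for i ∈ {1,…,m_0, m+1}, where φ is any fixed function of (Z_{m_0+1},…,Z_m). Then the pairs (X_1,Y_1),…,(X_{m_0},Y_{m_0}),(X_{m+1},Y_{m+1}) are exchangeable. -/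
open MeasureTheory

/-- Exchangeability of the supervised pairs in conformalized sketching.  The data are
`Z 0, …, Z (m-1)` and the query is `Z m` (so `Z 0, …, Z m` are the `m+1` exchangeable
variables).  For `i ∈ {0, …, m₀−1, m}` (encoded by `r i` for `i : Fin (m₀ + 1)`), set
`Y i = #{i' ∈ [m₀, m) : Z i' = Z i}` and `X i = (Z i, φ(Z m₀, …, Z (m-1)))`, where `φ`
is any fixed function of the sketched portion of the data.  Then the `m₀ + 1` pairs
`(X i, Y i)` are exchangeable. -/
theorem pairs_exchangeable
    {Ω : Type*} [MeasurableSpace Ω] (μ : Measure Ω) [IsProbabilityMeasure μ]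
    {𝒵 : Type*} [Countable 𝒵] [MeasurableSpace 𝒵] [MeasurableSingletonClass 𝒵]
    [DecidableEq 𝒵]
    {C : Type*} [MeasurableSpace C]
    (m m₀ : ℕ) (hm₀ : m₀ ≤ m)
    (Z : ℕ → Ω → 𝒵) (hmeas : ∀ i, Measurable (Z i))
    (hexch : ∀ σ : Equiv.Perm ℕ, (∀ i, m + 1 ≤ i → σ i = i) →
      Measure.map (fun ω (i : ℕ) => Z (σ i) ω) μ =
        Measure.map (fun ω (i : ℕ) => Z i ω) μ)
    (φ : (Fin (m - m₀) → 𝒵) → C)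
    (r : Fin (m₀ + 1) → ℕ) (hr : ∀ i, r i = if (i : ℕ) < m₀ then (i : ℕ) else m)
    (Y : ℕ → Ω → ℕ)
    (hY : ∀ i ω, Y i ω = ((Finset.Ico m₀ m).filter fun i' => Z i' ω = Z i ω).card)
    (X : ℕ → Ω → 𝒵 × C)
    (hX : ∀ i ω, X i ω = (Z i ω, φ fun t => Z (m₀ + (t : ℕ)) ω)) :
    ∀ σ : Equiv.Perm (Fin (m₀ + 1)),
      Measure.map (fun ω (i : Fin (m₀ + 1)) => (X (r (σ i)) ω, Y (r (σ i)) ω)) μ =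
        Measure.map (fun ω (i : Fin (m₀ + 1)) => (X (r i) ω, Y (r i) ω)) μ := by
  intro σ
  -- bounds on `r`
  have hrle : ∀ i, r i ≤ m := by
    intro i
    rw [hr i]
    split
    · omega
    · exact le_rfl
  -- `r` is injective
  have hrinj : Function.Injective r := by
    intro i j hij
    rw [hr i, hr j] at hij
    have hi : (i : ℕ) ≤ m₀ := Nat.lt_succ_iff.mp i.isLt
    have hj : (j : ℕ) ≤ m₀ := Nat.lt_succ_iff.mp j.isLt
    have : (i : ℕ) = (j : ℕ) := by
      by_cases h1 : (i : ℕ) < m₀ <;> by_cases h2 : (j : ℕ) < m₀ <;>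
        simp [h1, h2] at hij <;> omega
    exact Fin.ext this
  set ι : Fin (m₀ + 1) ↪ ℕ := ⟨r, hrinj⟩ with hι
  set τ : Equiv.Perm ℕ := σ.viaEmbedding ι with hτ
  have hτr : ∀ i, τ (r i) = r (σ i) := fun i => σ.viaEmbedding_apply ι i
  have hτfix : ∀ n, m₀ ≤ n → n ≠ m → τ n = n := by
    intro n hn hnm
    refine σ.viaEmbedding_apply_of_notMem ι n ?_
    rintro ⟨i, rfl⟩
    simp only [hι, Function.Embedding.coeFn_mk] at hn hnm
    rw [hr i] at hn hnm
    by_cases h : (i : ℕ) < m₀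
    · simp [h] at hn hnm; omega
    · simp [h] at hnm
  -- the post-processing map
  classical
  set G : (ℕ → 𝒵) → (Fin (m₀ + 1) → (𝒵 × C) × ℕ) := fun f i =>
    ((f (r i), φ fun t => f (m₀ + (t : ℕ))),
      ((Finset.Ico m₀ m).filter fun i' => f i' = f (r i)).card) with hG
  have hGmeas : Measurable G := by
    apply measurable_pi_lambda
    intro i
    apply Measurable.prod
    · apply Measurable.prod
      · exact measurable_pi_apply (r i)
      · exact (measurable_of_countable φ).comp
          (measurable_pi_lambda _ fun t => measurable_pi_apply _)
    · have : (fun f : ℕ → 𝒵 =>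
          (((Finset.Ico m₀ m).filter fun i' => f i' = f (r i)).card : ℕ)) =
          fun f => ∑ i' ∈ Finset.Ico m₀ m, if f i' = f (r i) then 1 else 0 := by
        funext f
        rw [Finset.card_filter]
      rw [this]
      apply Finset.measurable_sum
      intro i' _
      have : (fun f : ℕ → 𝒵 => if f i' = f (r i) then (1 : ℕ) else 0) =
          (fun p : 𝒵 × 𝒵 => if p.1 = p.2 then (1 : ℕ) else 0) ∘
            fun f => (f i', f (r i)) := rfl
      rw [this]
      exact (measurable_of_countable _).comp
        ((measurable_pi_apply _).prodMk (measurable_pi_apply _))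
  -- measurability of the coordinate processes
  have hZmeas : Measurable fun ω (n : ℕ) => Z n ω :=
    measurable_pi_lambda _ fun n => hmeas n
  have hZτmeas : Measurable fun ω (n : ℕ) => Z (τ n) ω :=
    measurable_pi_lambda _ fun n => hmeas (τ n)
  -- factorization identities
  have hfact1 : (fun ω (i : Fin (m₀ + 1)) => (X (r (σ i)) ω, Y (r (σ i)) ω)) =
      G ∘ fun ω (n : ℕ) => Z (τ n) ω := by
    funext ω
    funext i
    simp only [Function.comp_apply, hG, hX, hY]
    have h1 : Z (τ (r i)) ω = Z (r (σ i)) ω := by rw [hτr]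
    have h2 : ∀ t : Fin (m - m₀), Z (τ (m₀ + (t : ℕ))) ω = Z (m₀ + (t : ℕ)) ω := by
      intro t
      rw [hτfix (m₀ + (t : ℕ)) (Nat.le_add_right _ _) (by have := t.isLt; omega)]
    have h3 : ∀ i' ∈ Finset.Ico m₀ m, Z (τ i') ω = Z i' ω := by
      intro i' hi'
      rw [Finset.mem_Ico] at hi'
      rw [hτfix i' hi'.1 (by omega)]
    symm
    refine Prod.ext (Prod.ext h1 ?_) ?_
    · exact congrArg φ (funext h2)
    · simp only
      congr 1
      apply Finset.filter_congr
      intro i' hi'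
      rw [h1, h3 i' hi']
  have hfact2 : (fun ω (i : Fin (m₀ + 1)) => (X (r i) ω, Y (r i) ω)) =
      G ∘ fun ω (n : ℕ) => Z n ω := by
    funext ω
    funext i
    simp only [Function.comp_apply, hG, hX, hY]
  have hτfix' : ∀ n, m + 1 ≤ n → τ n = n := fun n hn =>
    hτfix n (by omega) (by omega)
  calc Measure.map (fun ω (i : Fin (m₀ + 1)) => (X (r (σ i)) ω, Y (r (σ i)) ω)) μ
      = Measure.map G (Measure.map (fun ω (n : ℕ) => Z (τ n) ω) μ) := by
        rw [hfact1, ← Measure.map_map hGmeas hZτmeas]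
    _ = Measure.map G (Measure.map (fun ω (n : ℕ) => Z n ω) μ) := by
        rw [hexch τ hτfix']
    _ = Measure.map (fun ω (i : Fin (m₀ + 1)) => (X (r i) ω, Y (r i) ω)) μ := by
        rw [hfact2, ← Measure.map_map hGmeas hZmeas]
end

section
/- For a > 1 and sufficiently large M' (specifically M' ≥ 2 ln(2a)/(a−1)), any solution δ ∈ [0,1] of a(δ^{aM'−1} + 1) = (1 + δ^{M'−1})(1+δ)^{(a−1)M'} satisfies δ ≤ ln(2a)/((a−1)M'); in particular δ ≤ 1/2. -/
set_option maxHeartbeats 1000000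

lemma exp_cubic (x : ℝ) (h0 : 0 ≤ x) (h1 : x ≤ 1) :
    Real.exp x ≤ 1 + x + x^2/2 + (2/9)*x^3 := by
  have h := Real.exp_bound' h0 h1 (n := 3) (by norm_num)
  simp [Finset.sum_range_succ, Nat.factorial] at h
  nlinarith [h]

lemma exp_le_one_add (x : ℝ) (h0 : 0 ≤ x) (h1 : x ≤ 1) :
    Real.exp (x - x^2/2) ≤ 1 + x := by
  have hA := exp_cubic x h0 h1
  have hB : 1 + x^2/2 ≤ Real.exp (x^2/2) := by
    have := Real.add_one_le_exp (x^2/2); linarith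
  have hmul : Real.exp (x - x^2/2) * Real.exp (x^2/2) = Real.exp x := by
    rw [← Real.exp_add]; ring_nf
  have hpos : (0:ℝ) < Real.exp (x^2/2) := Real.exp_pos _
  rw [← mul_le_mul_iff_of_pos_right hpos, hmul]
  calc Real.exp x ≤ 1 + x + x^2/2 + (2/9)*x^3 := hA
    _ ≤ (1 + x) * (1 + x^2/2) := by nlinarith
    _ ≤ (1 + x) * Real.exp (x^2/2) := by nlinarith

/-- For `a > 1` and `M'` large enough (`M' ≥ 2 ln(2a)/(a−1)`), with `aM'` an integer,
any solution `δ ∈ [0,1]` of `a(δ^{aM'−1} + 1) = (1 + δ^{M'−1})(1+δ)^{(a−1)M'}`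
satisfies `δ ≤ ln(2a)/((a−1)M')`; in particular `δ ≤ 1/2`. -/
theorem delta_bound (a : ℝ) (ha : 1 < a) (M' : ℕ)
    (hM' : 2 * Real.log (2 * a) / (a - 1) ≤ (M' : ℝ))
    (hint : ∃ N : ℕ, (N : ℝ) = a * (M' : ℝ))
    (δ : ℝ) (hδ : δ ∈ Set.Icc (0 : ℝ) 1)
    (heq : a * (δ ^ (a * (M' : ℝ) - 1) + 1) =
      (1 + δ ^ ((M' : ℝ) - 1)) * (1 + δ) ^ ((a - 1) * (M' : ℝ))) :
    δ ≤ Real.log (2 * a) / ((a - 1) * (M' : ℝ)) ∧ δ ≤ 1 / 2 := by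
  obtain ⟨hδ0, hδ1⟩ := hδ
  have ha1 : (0:ℝ) < a - 1 := by linarith
  have ha0 : (0:ℝ) < a := by linarith
  set u := Real.log a with hu_def
  set w := Real.log (2 * a) with hw_def
  have hu : 0 < u := Real.log_pos ha
  set l := Real.log 2 with hl_def
  have hw_eq : w = l + u := by
    rw [hw_def, Real.log_mul (by norm_num) (ne_of_gt ha0)]
  have hl : (0.6931471803 : ℝ) < l := Real.log_two_gt_d9
  have hl' : l < 0.6931471808 := Real.log_two_lt_d9
  have hw : 0 < w := by rw [hw_eq]; linarith
  -- M' ≥ 1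
  have hM1 : (1:ℝ) ≤ (M' : ℝ) := by
    have h0 : 0 < 2 * w / (a - 1) := by positivity
    have hMpos : (0:ℝ) < (M' : ℝ) := lt_of_lt_of_le h0 hM'
    exact_mod_cast Nat.one_le_iff_ne_zero.mpr (by exact_mod_cast hMpos.ne')
  set P := (a - 1) * (M' : ℝ) with hP_def
  have hP : 0 < P := by positivity
  have hP2w : 2 * w ≤ P := by
    rw [div_le_iff₀ ha1] at hM'
    calc 2 * w ≤ (M' : ℝ) * (a-1) := hM'
      _ = P := by ring
  have hPa : a - 1 ≤ P := by nlinarith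
  -- main bound: P * δ ≤ w
  have hmain : P * δ ≤ w := by
    rcases eq_or_lt_of_le hδ0 with h0 | hδpos
    · rw [← h0]; simpa using hw.le
    -- Step A : (1+δ)^P ≤ a
    have hstepA : (1 + δ) ^ P ≤ a := by
      have hpq : (M' : ℝ) - 1 ≤ a * (M' : ℝ) - 1 := by nlinarith
      have hqp : δ ^ (a * (M' : ℝ) - 1) ≤ δ ^ ((M' : ℝ) - 1) :=
        Real.rpow_le_rpow_of_exponent_ge hδpos hδ1 hpq
      have hsp : (0:ℝ) < 1 + δ ^ ((M' : ℝ) - 1) := by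
        have := Real.rpow_nonneg hδ0 ((M' : ℝ) - 1); linarith
      have hkey : (1 + δ ^ ((M' : ℝ) - 1)) * (1 + δ) ^ P
          ≤ (1 + δ ^ ((M' : ℝ) - 1)) * a := by
        rw [← heq]; nlinarith [hqp, ha0]
      exact le_of_mul_le_mul_left hkey hsp
    -- Step C : P * (δ - δ^2/2) ≤ u
    have hstepC : P * (δ - δ^2/2) ≤ u := by
      have h1 : Real.exp (δ - δ^2/2) ≤ 1 + δ := exp_le_one_add δ hδ0 hδ1
      have h2 : Real.exp (δ - δ^2/2) ^ P ≤ (1 + δ) ^ P :=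
        Real.rpow_le_rpow (Real.exp_pos _).le h1 hP.le
      have h3 : Real.exp (δ - δ^2/2) ^ P = Real.exp ((δ - δ^2/2) * P) := by
        rw [Real.rpow_def_of_pos (Real.exp_pos _), Real.log_exp]
      have h4 : Real.exp ((δ - δ^2/2) * P) ≤ Real.exp u := by
        rw [hu_def, Real.exp_log ha0, ← h3]
        exact le_trans h2 hstepA
      have h5 : (δ - δ^2/2) * P ≤ u := Real.exp_le_exp.mp h4
      linarith [h5]
    -- contradiction argument
    clear heq hint hstepA
    by_contra hcon
    push_neg at hcon
    have h1 : P * δ * (2 - δ) ≤ 2 * u := by nlinarith [hstepC]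
    -- d1 : 2l < w*δ
    have hd1 : 2 * l < w * δ := by
      have h2d : 0 < 2 - δ := by linarith
      have hlt : w * (2 - δ) < P * δ * (2 - δ) := by nlinarith [hcon]
      have hw2 : w * (2 - δ) < 2 * u := lt_of_lt_of_le hlt h1
      rw [hw_eq] at hw2 ⊢; nlinarith
    have hwd_le : w * δ ≤ w := by nlinarith
    have hlu : l < u := by rw [hw_eq] at hd1; nlinarith
    have hwd2u : w * δ < 2 * u := by
      have h2d : 0 < 2 - δ := by linarith
      have hlt : w * (2 - δ) < P * δ * (2 - δ) := by nlinarith [hcon]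
      nlinarith [lt_of_lt_of_le hlt h1]
    -- d2 : 2*l*P ≤ w^2
    have hd2 : 2 * l * P ≤ w ^ 2 := by
      have hE : 0 ≤ P * (w * δ - 2*l) * (2*u - w*δ) := by
        apply mul_nonneg (mul_nonneg hP.le (by linarith)) (by linarith)
      have hF : w^2 * (P * δ * (2 - δ)) ≤ w^2 * (2*u) :=
        mul_le_mul_of_nonneg_left h1 (sq_nonneg w)
      have hkey : 4 * l * u * P ≤ 2 * u * (l + u)^2 := by
        rw [hw_eq] at hE hF; nlinarith [hE, hF]
      rw [hw_eq]; nlinarith [hkey, hu]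
    -- d3 : 4l ≤ w, so u ≥ 3l
    have hd3 : 4 * l ≤ w := by nlinarith [hd2, hP2w, hw]
    have hv0 : 0 ≤ u - 3 * l := by rw [hw_eq] at hd3; linarith
    -- d4 : 2l(a-1) ≤ w^2
    have hd4 : 2 * l * (a - 1) ≤ w ^ 2 := by nlinarith [hd2, hPa, hl]
    -- d5 : 8 * (1 + (u-3l)/2)^2 ≤ a
    have hd5 : 8 * (1 + (u - 3*l)/2) ^ 2 ≤ a := by
      have hexp3l : Real.exp (3 * l) = 8 := by
        rw [hl_def, show (3:ℝ) * Real.log 2 = Real.log 2 + (Real.log 2 + Real.log 2) from by ring,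
          Real.exp_add, Real.exp_add, Real.exp_log (by norm_num : (0:ℝ) < 2)]
        norm_num
      have hsplit : a = 8 * Real.exp (u - 3*l) := by
        rw [← hexp3l, ← Real.exp_add,
          show 3*l + (u - 3*l) = u from by ring, hu_def, Real.exp_log ha0]
      have hq : (1 + (u - 3*l)/2) ^ 2 ≤ Real.exp (u - 3*l) := by
        have hh1 : 1 + (u - 3*l)/2 ≤ Real.exp ((u - 3*l)/2) := by
          have := Real.add_one_le_exp ((u - 3*l)/2); linarith
        have hh2 : (0:ℝ) ≤ 1 + (u - 3*l)/2 := by linarith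
        have hh3 : Real.exp ((u - 3*l)/2) * Real.exp ((u - 3*l)/2) = Real.exp (u - 3*l) := by
          rw [← Real.exp_add]; ring_nf
        nlinarith [hh1, hh2, hh3, Real.exp_pos ((u - 3*l)/2)]
      calc 8 * (1 + (u - 3*l)/2) ^ 2 ≤ 8 * Real.exp (u - 3*l) := by linarith [hq]
        _ = a := hsplit.symm
    -- final contradiction
    rw [hw_eq] at hd4
    nlinarith [hd4, hd5, hv0, hl, hl', sq_nonneg (u - 3*l), mul_nonneg hv0 hv0,
      mul_nonneg hv0 (le_of_lt (lt_trans (by norm_num : (0:ℝ) < 0.6931471803) hl))]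
  constructor
  · rw [le_div_iff₀ hP]; nlinarith [hmain]
  · nlinarith [hmain, hP2w, hw, hδ0]
end
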